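/- Let G be a finite non-trivial solvable group such that Γ(G) has no edges; that is, for any two distinct non-trivial proper subgroups H and K of G, the setwise product HK is not equal to G. Then G is a cyclic group of prime-power order. -/

import Mathlib

open scoped Pointwise
open scoped commutatorElement

private lemma normal_of_commutator_le' {G : Type*} [Group G] {N : Subgroup G}
    (hle : commutator G ≤ N) : N.Normal := by
  constructor
  intro n hn g
  have : ⁅g, n⁆ ∈ N := hle (Subgroup.commutator_mem_commutator (Subgroup.mem_top g)
    (Subgroup.mem_top n))
  have h2 : ⁅g, n⁆ * n ∈ N := N.mul_mem this hn
  simpa [commutatorElement_def, mul_assoc] using h2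

private lemma commutator_ne_top' {G : Type*} [Group G] [Nontrivial G] [Group.IsSolvable G] :
    commutator G ≠ ⊤ := by
  intro htop
  obtain ⟨n, hn⟩ := Group.IsSolvable.solvable (G := G)
  have : ∀ m : ℕ, derivedSeries G m = ⊤ := by
    intro m
    induction m with
    | zero => rfl
    | succ k ih => rw [derivedSeries_succ, ih, ← commutator_def, htop]
  rw [this n] at hn
  exact top_ne_bot hn

theorem cyclic_pGroup_of_comaximal_edgeless {G : Type*} [Group G] [Finite G]
    [Nontrivial G] [Group.IsSolvable G]
    (h : ∀ H K : Subgroup G, H ≠ ⊥ → H ≠ ⊤ → K ≠ ⊥ → K ≠ ⊤ → H ≠ K →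
      (H : Set G) * (K : Set G) ≠ Set.univ) :
    IsCyclic G ∧ ∃ p n : ℕ, p.Prime ∧ Nat.card G = p ^ n := by
  classical
  -- Find a maximal subgroup N containing the commutator subgroup.
  obtain ⟨N, hN, hle⟩ := (IsCoatomic.eq_top_or_exists_le_coatom (commutator G)).resolve_left commutator_ne_top'
  haveI hNnormal : N.Normal := normal_of_commutator_le' hle
  -- N has prime index p.
  have hindex_ne_one : N.index ≠ 1 := fun h1 => hN.1 (Subgroup.index_eq_one.mp h1)
  have hindex_ne_zero : N.index ≠ 0 := Subgroup.index_ne_zero_of_finite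
  obtain ⟨p, hp, hindex0⟩ : ∃ p : ℕ, p.Prime ∧ p ∣ N.index :=
    ⟨N.index.minFac, Nat.minFac_prime hindex_ne_one, Nat.minFac_dvd _⟩
  haveI : Fact p.Prime := ⟨hp⟩
  -- In fact N.index = p: the quotient is generated by an element of order p.
  have hindex : N.index = p := by
    have hdvd : p ∣ Nat.card (G ⧸ N) := by
      rw [← Subgroup.index_eq_card]; exact hindex0
    obtain ⟨g, hg⟩ := exists_prime_orderOf_dvd_card' p hdvd
    have hgne : g ≠ 1 := by
      intro h1; rw [h1, orderOf_one] at hg; exact hp.one_lt.ne' hg.symm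
    -- comap of zpowers g strictly contains N
    have hle2 : N ≤ (Subgroup.zpowers g).comap (QuotientGroup.mk' N) := by
      intro x hx
      have hx1 : (QuotientGroup.mk' N) x = 1 := (QuotientGroup.eq_one_iff x).mpr hx
      rw [Subgroup.mem_comap, hx1]
      exact Subgroup.one_mem _
    have hcomap : N < (Subgroup.zpowers g).comap (QuotientGroup.mk' N) := by
      refine lt_of_le_of_ne hle2 ?_
      intro heq
      obtain ⟨x, hx⟩ := QuotientGroup.mk'_surjective N g
      have hmem : x ∈ (Subgroup.zpowers g).comap (QuotientGroup.mk' N) := by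
        rw [Subgroup.mem_comap, hx]
        exact Subgroup.mem_zpowers g
      have hxN : x ∈ N := by rw [heq]; exact hmem
      exact hgne (hx ▸ (QuotientGroup.eq_one_iff x).mpr hxN)
    have htop := hN.2 _ hcomap
    have hzp : Subgroup.zpowers g = ⊤ := by
      rw [eq_top_iff]
      intro y _
      obtain ⟨x, hx⟩ := QuotientGroup.mk'_surjective N y
      have : x ∈ (Subgroup.zpowers g).comap (QuotientGroup.mk' N) := htop ▸ Subgroup.mem_top x
      rw [Subgroup.mem_comap, hx] at this
      exact this
    have hcard : Nat.card (G ⧸ N) = p := by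
      rw [← hg, ← Nat.card_zpowers, hzp]
      exact (Nat.card_congr Subgroup.topEquiv.toEquiv).symm
    rw [Subgroup.index_eq_card, hcard]
  -- Take a Sylow p-subgroup P; it must be all of G.
  obtain ⟨P⟩ := (Sylow.nonempty : Nonempty (Sylow p G))
  have hPtop : (P : Subgroup G) = ⊤ := by
    by_contra hPtop
    have hPnotle : ¬ (P : Subgroup G) ≤ N := by
      intro hPN
      exact P.not_dvd_index (hindex0.trans (Subgroup.index_dvd_of_le hPN))
    have hPbot : (P : Subgroup G) ≠ ⊥ := by
      intro hb
      apply P.not_dvd_index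
      rw [hb, Subgroup.index_bot]
      have := Subgroup.index_dvd_card N
      rwa [hindex] at this
    have hNbot : N ≠ ⊥ := by
      intro hb
      have hcardG : Nat.card G = p := by rw [← hindex, hb, Subgroup.index_bot]
      have hPdvd : (P : Subgroup G).index ∣ p := by
        have := Subgroup.index_dvd_card (P : Subgroup G)
        rwa [hcardG] at this
      have : (P : Subgroup G).index = 1 :=
        ((Nat.dvd_prime hp).mp hPdvd).resolve_right (fun hh => P.not_dvd_index (by rw [hh]))
      exact hPtop (Subgroup.index_eq_one.mp this)
    have hjoin : N ⊔ (P : Subgroup G) = ⊤ := by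
      apply hN.2
      refine lt_of_le_of_ne le_sup_left ?_
      intro heq
      exact hPnotle (heq ▸ le_sup_right)
    have hNP : N ≠ (P : Subgroup G) := fun he => hPnotle (he ▸ le_refl _)
    apply h N P hNbot hN.1 hPbot hPtop hNP
    rw [← Subgroup.normal_mul, hjoin, Subgroup.coe_top]
  -- G is a p-group.
  have hpg : IsPGroup p G := by
    have := P.2
    rw [hPtop] at this
    exact this.of_equiv Subgroup.topEquiv
  -- G is nilpotent, so maximal subgroups are normal.
  haveI : Group.IsNilpotent G := hpg.isNilpotent
  have hnormal : ∀ M : Subgroup G, IsCoatom M → M.Normal :=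
    fun M hM => Subgroup.NormalizerCondition.normal_of_coatom M (normalizerCondition_of_isNilpotent) hM
  -- All coatoms coincide.
  have huniq : ∀ M₁ M₂ : Subgroup G, IsCoatom M₁ → IsCoatom M₂ → M₁ = M₂ := by
    intro M₁ M₂ h₁ h₂
    by_contra hne
    have hbot : ∀ M M' : Subgroup G, IsCoatom M → IsCoatom M' → M ≠ M' → M ≠ ⊥ := by
      intro M M' hM hM' hne' hMb
      rw [hMb] at hM hne'
      exact hM'.1 (hM.2 M' (bot_lt_iff_ne_bot.mpr (fun hb => hne' hb.symm)))
    haveI := hnormal M₁ h₁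
    have hjoin : M₁ ⊔ M₂ = ⊤ := by
      apply h₁.2
      refine lt_of_le_of_ne le_sup_left ?_
      intro heq
      have hle21 : M₂ ≤ M₁ := le_sup_right.trans heq.symm.le
      rcases eq_or_lt_of_le hle21 with heq2 | hlt
      · exact hne heq2.symm
      · exact h₁.1 (h₂.2 M₁ hlt)
    apply h M₁ M₂ (hbot M₁ M₂ h₁ h₂ hne) h₁.1 (hbot M₂ M₁ h₂ h₁ (fun he => hne he.symm)) h₂.1 hne
    rw [← Subgroup.normal_mul, hjoin, Subgroup.coe_top]
  -- Hence G is cyclic.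
  obtain ⟨M, hM, -⟩ := (IsCoatomic.eq_top_or_exists_le_coatom (⊥ : Subgroup G)).resolve_left bot_ne_top
  obtain ⟨x, hx⟩ : ∃ x : G, x ∉ M := by
    by_contra hc
    push_neg at hc
    exact hM.1 (eq_top_iff.mpr fun y _ => hc y)
  have hxtop : Subgroup.zpowers x = ⊤ := by
    by_contra hne
    obtain ⟨M', hM', hle'⟩ := (IsCoatomic.eq_top_or_exists_le_coatom (Subgroup.zpowers x)).resolve_left hne
    exact hx (huniq M' M hM' hM ▸ hle' (Subgroup.mem_zpowers x))
  have hcyc : IsCyclic G := by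
    refine ⟨⟨x, fun y => ?_⟩⟩
    have hy : y ∈ Subgroup.zpowers x := by rw [hxtop]; exact Subgroup.mem_top y
    exact hy
  obtain ⟨n, hn⟩ := IsPGroup.iff_card.mp hpg
  exact ⟨hcyc, p, n, hp, hn⟩
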